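/- For every δ ∈ (0,1), the function h_δ : [0,1] → ℝ defined by h_δ(x) = (1−x)·(x − δx²/4 − 1/2) + δx³/12 attains its maximum over [0,1] at the unique point x* = (4 + δ − √((4−δ)² − 8δ))/(4δ), which lies in (0,1); i.e., h_δ(x) < h_δ(x*) for every x ∈ [0,1] with x ≠ x*. -/

import Mathlib

/-- Seller's ex-ante expected profit from the dynamic mechanism with time-0 acceptance
threshold `x` in the uniform example: `h_δ(x) = (1−x)(x − δx²/4 − 1/2) + δx³/12`. -/
noncomputable def hDyn (δ x : ℝ) : ℝ := (1 - x) * (x - δ * x^2 / 4 - 1/2) + δ * x^3 / 12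

/-- The claimed maximizer `x* = (4 + δ − √((4−δ)² − 8δ))/(4δ)`. -/
noncomputable def xStar (δ : ℝ) : ℝ := (4 + δ - Real.sqrt ((4 - δ)^2 - 8 * δ)) / (4 * δ)

/-- for every `δ ∈ (0,1)`, `h_δ` attains its maximum over `[0,1]` at the
unique point `x* = (4 + δ − √((4−δ)² − 8δ))/(4δ) ∈ (0,1)`. -/
theorem stmt16 (δ : ℝ) (hδ : δ ∈ Set.Ioo (0:ℝ) 1) :
    xStar δ ∈ Set.Ioo (0:ℝ) 1 ∧
    ∀ x ∈ Set.Icc (0:ℝ) 1, x ≠ xStar δ → hDyn δ x < hDyn δ (xStar δ) := by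
  obtain ⟨hδ0, hδ1⟩ := hδ
  set D : ℝ := (4 - δ)^2 - 8 * δ with hD
  have hDpos : 0 < D := by nlinarith
  set s : ℝ := Real.sqrt D with hs
  have hs2 : s^2 = D := Real.sq_sqrt hDpos.le
  have hspos : 0 < s := Real.sqrt_pos.mpr hDpos
  have hslt : s < 4 - δ := by nlinarith
  have hsgt : 4 - 3*δ < s := by nlinarith
  set y : ℝ := xStar δ with hy
  have h4δ : (4:ℝ) * δ ≠ 0 := by positivity
  have hyeq : 4 * δ * y = 4 + δ - s := by
    rw [hy, xStar]; field_simp; rw [hs, hD, mul_comm δ 8]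
  have hy1 : y < 1 := by
    have : 4 * δ * y < 4 * δ * 1 := by rw [hyeq]; nlinarith
    exact lt_of_mul_lt_mul_left this (by positivity)
  have hy0 : 0 < y := by
    have : 4 * δ * 0 < 4 * δ * y := by rw [hyeq]; nlinarith
    exact lt_of_mul_lt_mul_left this (by positivity)
  have hcrit : 2*δ*y^2 - (4+δ)*y + 3 = 0 := by
    have h1 : (4*δ*y - (4+δ))^2 = s^2 := by rw [hyeq]; ring
    rw [hs2, hD] at h1
    have h2 : 8*δ*(2*δ*y^2 - (4+δ)*y + 3) = 0 := by nlinarith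
    rcases mul_eq_zero.mp h2 with h3 | h3
    · exact absurd h3 (by positivity : (0:ℝ) < 8 * δ).ne'
    · linarith
  refine ⟨⟨hy0, hy1⟩, ?_⟩
  rintro x ⟨hx0, hx1⟩ hxy
  have hkey : hDyn δ y - hDyn δ x
      = (x - y)^2 * (1 + δ/4 - δ*(2*y + x)/3) := by
    simp only [hDyn]
    linear_combination ((y - x)/2) * hcrit
  have hsq : 0 < (x - y)^2 := by
    have : x - y ≠ 0 := sub_ne_zero.mpr hxy
    positivity
  have hfac : 0 < 1 + δ/4 - δ*(2*y + x)/3 := by nlinarith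
  nlinarith [mul_pos hsq hfac]
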